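/- (Paz–Schnorr characterization of co-cyclic lattices.) Let n and q be positive integers and let L be a subgroup of ℤ^n with [ℤ^n : L] = q. Then the quotient group ℤ^n/L is cyclic if and only if there exists a vector a = (a_1, …, a_n) ∈ ℤ^n primitive modulo q such that L = L_n(q, a) = {x ∈ ℤ^n : a_1x_1 + ⋯ + a_nx_n ≡ 0 (mod q)}. -/

import Mathlib

/-- The lattice `L_n(q, a) = {x ∈ ℤ^n : a₁x₁ + ⋯ + aₙxₙ ≡ 0 (mod q)}`. -/
def Lnq (n q : ℕ) (a : Fin n → ℤ) : AddSubgroup (Fin n → ℤ) where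
  carrier := {x | (q : ℤ) ∣ ∑ i, a i * x i}
  zero_mem' := by simp
  add_mem' := by
    intro x y hx hy
    show (q : ℤ) ∣ ∑ i, a i * (x + y) i
    have h : ∑ i, a i * (x + y) i = (∑ i, a i * x i) + ∑ i, a i * y i := by
      rw [← Finset.sum_add_distrib]
      exact Finset.sum_congr rfl fun i _ => by simp [mul_add]
    rw [h]
    exact dvd_add hx hy
  neg_mem' := by
    intro x hx
    show (q : ℤ) ∣ ∑ i, a i * (-x) i
    have h : ∑ i, a i * (-x) i = -∑ i, a i * x i := by
      rw [← Finset.sum_neg_distrib]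
      exact Finset.sum_congr rfl fun i _ => by simp [mul_neg]
    rw [h]
    exact hx.neg_right

/-- Paz–Schnorr characterization of co-cyclic lattices: a subgroup `L ⊆ ℤ^n` of index `q`
has cyclic quotient `ℤ^n/L` iff `L = L_n(q, a)` for some vector `a` primitive modulo `q`. -/
theorem cocyclic_iff_congruence_lattice (n q : ℕ) (hn : 0 < n) (hq : 0 < q)
    (L : AddSubgroup (Fin n → ℤ)) (hL : L.index = q) :
    IsAddCyclic ((Fin n → ℤ) ⧸ L) ↔
      ∃ a : Fin n → ℤ, Int.gcd (Finset.univ.gcd a) (q : ℤ) = 1 ∧ L = Lnq n q a := by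
  haveI : NeZero q := ⟨hq.ne'⟩
  constructor
  · rintro ⟨g, hg⟩
    have hcard : Nat.card ((Fin n → ℤ) ⧸ L) = q := hL
    have hord : addOrderOf g = q := by
      rw [addOrderOf_eq_card_of_forall_mem_zmultiples
        (fun x => AddSubgroup.mem_zmultiples_iff.mpr (hg x)), hcard]
    set π := QuotientAddGroup.mk' L with hπ
    have hget : ∀ i : Fin n, ∃ k : ℤ, k • g = π (Pi.single i 1) := fun i => hg _
    choose a ha using hget
    have key : ∀ x : Fin n → ℤ, π x = (∑ i, a i * x i) • g := by
      intro x
      conv_lhs => rw [← Finset.univ_sum_single x]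
      rw [map_sum]
      have hsingle : ∀ i : Fin n, (Pi.single i (x i) : Fin n → ℤ)
          = x i • (Pi.single i (1 : ℤ) : Fin n → ℤ) := by
        intro i
        funext j
        by_cases h : j = i <;> simp [Pi.single_apply, h]
      rw [Finset.sum_congr rfl fun i _ => by
        rw [hsingle i, map_zsmul, ← ha i, smul_smul]]
      rw [← Finset.sum_smul]
      congr 1
      exact Finset.sum_congr rfl fun i _ => mul_comm _ _
    refine ⟨a, ?_, ?_⟩
    · obtain ⟨x, hx⟩ := QuotientAddGroup.mk'_surjective L g
      have h1 : (∑ i, a i * x i) • g = (1 : ℤ) • g := by rw [← key x, hx, one_zsmul]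
      have hdvd : (q : ℤ) ∣ (∑ i, a i * x i) - 1 := by
        rw [← hord, addOrderOf_dvd_iff_zsmul_eq_zero, sub_zsmul, h1]
        simp
      set d : ℕ := Int.gcd (Finset.univ.gcd a) (q : ℤ) with hd
      have hda : ∀ i, (d : ℤ) ∣ a i := fun i =>
        (Int.gcd_dvd_left _ _).trans (Finset.gcd_dvd (Finset.mem_univ i))
      have hdq : (d : ℤ) ∣ (q : ℤ) := Int.gcd_dvd_right _ _
      have hds : (d : ℤ) ∣ ∑ i, a i * x i :=
        Finset.dvd_sum fun i _ => (hda i).mul_right _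
      have h1' : (d : ℤ) ∣ 1 := by
        have := dvd_sub hds (hdq.trans hdvd)
        simpa using this
      exact Nat.dvd_one.mp (by exact_mod_cast h1')
    · ext x
      have hmem : x ∈ Lnq n q a ↔ (q : ℤ) ∣ ∑ i, a i * x i := Iff.rfl
      have h0 : x ∈ L ↔ π x = 0 := (QuotientAddGroup.eq_zero_iff x).symm
      rw [hmem, h0, key x, ← hord]
      exact (addOrderOf_dvd_iff_zsmul_eq_zero).symm
  · rintro ⟨a, hgcd, rfl⟩
    let f : (Fin n → ℤ) →+ ZMod q :=
      { toFun := fun x => ((∑ i, a i * x i : ℤ) : ZMod q)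
        map_zero' := by simp
        map_add' := by
          intro x y
          show ((∑ i, a i * (x + y) i : ℤ) : ZMod q)
            = ((∑ i, a i * x i : ℤ) : ZMod q) + ((∑ i, a i * y i : ℤ) : ZMod q)
          have h : (∑ i, a i * (x + y) i) = (∑ i, a i * x i) + ∑ i, a i * y i := by
            rw [← Finset.sum_add_distrib]
            exact Finset.sum_congr rfl fun i _ => by simp [mul_add]
          rw [h, Int.cast_add] }
    have hker : f.ker = Lnq n q a := by
      ext x
      rw [AddMonoidHom.mem_ker]
      show ((∑ i, a i * x i : ℤ) : ZMod q) = 0 ↔ (q : ℤ) ∣ ∑ i, a i * x i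
      rw [ZMod.intCast_zmod_eq_zero_iff_dvd]
    have hrange : ∀ i, ((a i : ℤ) : ZMod q) ∈ f.range := by
      intro i
      refine ⟨Pi.single i 1, ?_⟩
      show ((∑ j, a j * (Pi.single i 1 : Fin n → ℤ) j : ℤ) : ZMod q) = ((a i : ℤ) : ZMod q)
      congr 1
      rw [Finset.sum_eq_single i]
      · simp
      · intro j _ hj
        simp [Pi.single_apply, hj]
      · simp
    have hone : ((1 : ℤ) : ZMod q) ∈ f.range := by
      set S : AddSubgroup ℤ := f.range.comap (Int.castAddHom (ZMod q)) with hS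
      obtain ⟨d, hd⟩ := Int.subgroup_cyclic S
      have hmemS : ∀ m : ℤ, m ∈ S ↔ d ∣ m := by
        intro m
        rw [hd, AddSubgroup.mem_closure_singleton]
        simp only [zsmul_eq_mul, Int.cast_id]
        exact ⟨fun ⟨k, h⟩ => Dvd.intro_left k h, fun ⟨k, h⟩ => ⟨k, by rw [h]; ring⟩⟩
      have hda : ∀ i, d ∣ a i := fun i => (hmemS (a i)).mp (hrange i)
      have hdq : d ∣ (q : ℤ) := (hmemS q).mp (by
        show ((q : ℤ) : ZMod q) ∈ f.range
        refine ⟨0, ?_⟩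
        rw [map_zero]
        simp)
      have hdg : d ∣ (Finset.univ.gcd a) := Finset.dvd_gcd fun i _ => hda i
      have : d ∣ (Int.gcd (Finset.univ.gcd a) (q : ℤ) : ℤ) := Int.dvd_coe_gcd hdg hdq
      rw [hgcd] at this
      exact (hmemS 1).mpr (by exact_mod_cast this)
    have hsurj : Function.Surjective f := by
      intro z
      have : z = (z.val : ZMod q) := (ZMod.natCast_rightInverse z).symm
      obtain ⟨x, hx⟩ := hone
      refine ⟨z.val • x, ?_⟩
      rw [map_nsmul, hx, Int.cast_one, nsmul_eq_mul, mul_one]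
      exact ZMod.natCast_rightInverse z
    have := QuotientAddGroup.quotientKerEquivOfSurjective f hsurj
    rw [← hker]
    exact isAddCyclic_of_surjective this.symm this.symm.surjective
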